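/- (Proposition 4: diversity and revelation.) Assume d_A ≠ 0, d_B ≠ 0, and |d_A| ≥ |d_B|. Then every Nash equilibrium (α_A*, α_B*) of the digital representative game satisfies α_A* ≥ α_B*: the member whose preference is more diverse reveals at least as much information at equilibrium. -/

import Mathlib

open Set Filter

/-- Team decision formed by the two digital representatives. -/
noncomputable def teamDec (lam : ℝ → ℝ) (thA thB mu : ℝ) (aA aB : ℝ) : ℝ :=
  (lam aA * thA + (1 - lam aA) * mu + lam aB * thB + (1 - lam aB) * mu) / 2

/-- Alice's total loss: preference loss plus communication cost. -/
noncomputable def lossA (lam c : ℝ → ℝ) (thA thB mu : ℝ) (aA aB : ℝ) : ℝ :=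
  (thA - teamDec lam thA thB mu aA aB) ^ 2 + c aA

/-- Bob's total loss: preference loss plus communication cost. -/
noncomputable def lossB (lam c : ℝ → ℝ) (thA thB mu : ℝ) (aA aB : ℝ) : ℝ :=
  (thB - teamDec lam thA thB mu aA aB) ^ 2 + c aB

/-- The function `f_m(α) = λ(α) + (2/d_m²)·c'(α)/λ'(α)`. -/
noncomputable def fFun (lam lam' c' : ℝ → ℝ) (d : ℝ) (α : ℝ) : ℝ :=
  lam α + (2 / d ^ 2) * (c' α / lam' α)

/-- The function `h_m(α) = 2 − λ(α)·d_{−m}/d_m`. -/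
noncomputable def hFun (lam : ℝ → ℝ) (dm dOther : ℝ) (α : ℝ) : ℝ :=
  2 - lam α * dOther / dm

/-- `a` is a best response of Alice to Bob's revelation `aB`:
it minimizes `α ↦ L_A(α, aB)` over `[0,1)`. -/
def IsBestRespA (lam c : ℝ → ℝ) (thA thB mu : ℝ) (a aB : ℝ) : Prop :=
  a ∈ Set.Ico (0:ℝ) 1 ∧
    ∀ x ∈ Set.Ico (0:ℝ) 1, lossA lam c thA thB mu a aB ≤ lossA lam c thA thB mu x aB

/-- Nash equilibrium of the digital representative game. -/
def IsNashEq (lam c : ℝ → ℝ) (thA thB mu : ℝ) (aA aB : ℝ) : Prop :=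
  aA ∈ Set.Ico (0:ℝ) 1 ∧ aB ∈ Set.Ico (0:ℝ) 1 ∧
  (∀ α ∈ Set.Ico (0:ℝ) 1, lossA lam c thA thB mu aA aB ≤ lossA lam c thA thB mu α aB) ∧
  (∀ α ∈ Set.Ico (0:ℝ) 1, lossB lam c thA thB mu aA aB ≤ lossB lam c thA thB mu aA α)

/-- derivative of Alice's loss in her own action. -/
lemma hasDerivAt_lossA_fst (lam c : ℝ → ℝ) (lx cx thA thB mu aB x : ℝ)
    (hl : HasDerivAt lam lx x) (hc : HasDerivAt c cx x) :
    HasDerivAt (fun α => lossA lam c thA thB mu α aB)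
      (-(thA - teamDec lam thA thB mu x aB) * (lx * (thA - mu)) + cx) x := by
  have hT : HasDerivAt (fun α => teamDec lam thA thB mu α aB) (lx * (thA - mu) / 2) x := by
    have h := ((((hl.mul_const thA).add
        (((hasDerivAt_const x (1:ℝ)).sub hl).mul_const mu)).add_const
        (lam aB * thB)).add_const ((1 - lam aB) * mu)).div_const 2
    unfold teamDec
    exact h.congr_deriv (by ring)
  have h2 := (((hasDerivAt_const x thA).sub hT).pow 2).add hc
  exact h2.congr_deriv (by simp only [Pi.sub_apply]; push_cast; ring)

/-- derivative of Bob's loss in his own action. -/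
lemma hasDerivAt_lossB_snd (lam c : ℝ → ℝ) (lx cx thA thB mu aA x : ℝ)
    (hl : HasDerivAt lam lx x) (hc : HasDerivAt c cx x) :
    HasDerivAt (fun α => lossB lam c thA thB mu aA α)
      (-(thB - teamDec lam thA thB mu aA x) * (lx * (thB - mu)) + cx) x := by
  have hT : HasDerivAt (fun α => teamDec lam thA thB mu aA α) (lx * (thB - mu) / 2) x := by
    have h := ((((hasDerivAt_const x (lam aA * thA + (1 - lam aA) * mu)).add
        (hl.mul_const thB)).add
        (((hasDerivAt_const x (1:ℝ)).sub hl).mul_const mu)).div_const 2)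
    unfold teamDec
    exact h.congr_deriv (by ring)
  have h2 := (((hasDerivAt_const x thB).sub hT).pow 2).add hc
  exact h2.congr_deriv (by simp only [Pi.sub_apply]; push_cast; ring)

/-- At a minimum over `[0,1)` attained at the left endpoint `0`,
the derivative is nonnegative. -/
lemma deriv_nonneg_at_left (f : ℝ → ℝ) (f' : ℝ) (hf : HasDerivAt f f' 0)
    (hmin : ∀ x ∈ Set.Ico (0:ℝ) 1, f 0 ≤ f x) : 0 ≤ f' := by
  have h := hasDerivAt_iff_tendsto_slope.mp hf
  have h2 : Tendsto (slope f 0) (nhdsWithin 0 (Set.Ioi 0)) (nhds f') :=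
    h.mono_left (nhdsWithin_mono _ (fun x hx => ne_of_gt hx))
  refine ge_of_tendsto h2 ?_
  filter_upwards [Ioo_mem_nhdsGT_of_mem (Set.left_mem_Ico.2 one_pos)] with x hx
  rw [slope_def_field]
  have hpos : 0 < x - 0 := by simpa using hx.1
  exact div_nonneg (sub_nonneg.2 (hmin x ⟨hx.1.le, hx.2⟩)) hpos.le

set_option maxHeartbeats 1000000 in
/-- Same-sign case: first-order conditions are inconsistent with `aA < aB`. -/
lemma algebra_same_sign (p q cA cB LA LB dA dB : ℝ)
    (hp : 0 ≤ p) (hq : 0 < q)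
    (hLA : 0 < LA) (hLB : 0 < LB) (hLBA : LB ≤ LA)
    (hcA : 0 ≤ cA) (hcAB : cA < cB)
    (hP : 0 < dA * dB) (hd : dB ^ 2 ≤ dA ^ 2)
    (hA : LA * ((2 - p) * dA ^ 2 - q * (dA * dB)) ≤ 2 * cA)
    (hB : 2 * cB ≤ LB * ((2 - q) * dB ^ 2 - p * (dA * dB))) : False := by
  have hdB : dB ≠ 0 := by
    intro h; rw [h] at hP; simp at hP
  have hdB2 : 0 < dB ^ 2 := by positivity
  have hdA2 : 0 < dA ^ 2 := lt_of_lt_of_le hdB2 hd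
  have hcB : 0 < cB := lt_of_le_of_lt hcA hcAB
  have t1 : LA * ((2 - p) * dA ^ 2 - q * (dA * dB)) * (LB * dB ^ 2) ≤ 2 * cA * (LB * dB ^ 2) :=
    mul_le_mul_of_nonneg_right hA (by positivity)
  have t2 : 2 * cB * (LA * dA ^ 2) ≤ LB * ((2 - q) * dB ^ 2 - p * (dA * dB)) * (LA * dA ^ 2) :=
    mul_le_mul_of_nonneg_right hB (by positivity)
  have t3 : 2 * cA * (LB * dB ^ 2) < 2 * cB * (LA * dA ^ 2) := by
    nlinarith [mul_lt_mul_of_pos_right hcAB (mul_pos hLB hdB2),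
      mul_le_mul_of_nonneg_left hd (by positivity : (0:ℝ) ≤ 2 * cB * LB),
      mul_le_mul_of_nonneg_right hLBA (by positivity : (0:ℝ) ≤ dA ^ 2)]
  have t4 : LA * ((2 - p) * dA ^ 2 - q * (dA * dB)) * (LB * dB ^ 2)
      < LB * ((2 - q) * dB ^ 2 - p * (dA * dB)) * (LA * dA ^ 2) :=
    lt_of_le_of_lt t1 (lt_of_lt_of_le t3 t2)
  have e : LA * ((2 - p) * dA ^ 2 - q * (dA * dB)) * (LB * dB ^ 2)
      - LB * ((2 - q) * dB ^ 2 - p * (dA * dB)) * (LA * dA ^ 2)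
      = LA * LB * (dA * dB) * ((q - p) * (dA * dB) + p * dA ^ 2 - q * dB ^ 2) := by ring
  have h5 : LA * LB * (dA * dB) * ((q - p) * (dA * dB) + p * dA ^ 2 - q * dB ^ 2) < 0 := by
    linarith [t4, e]
  have hY : 0 ≤ (q - p) * (dA * dB) + p * dA ^ 2 - q * dB ^ 2 := by
    rcases lt_or_gt_of_ne hdB with hneg | hpos
    · have hdAneg : dA < 0 := by nlinarith
      have : dA ≤ dB := by nlinarith
      nlinarith [mul_nonneg hp (mul_nonneg (neg_nonneg.2 hdAneg.le) (sub_nonneg.2 this)),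
        mul_nonneg hq.le (mul_nonneg (neg_nonneg.2 hneg.le) (sub_nonneg.2 this))]
    · have hdApos : 0 < dA := by nlinarith
      have : dB ≤ dA := by nlinarith
      nlinarith [mul_nonneg hp (mul_nonneg hdApos.le (sub_nonneg.2 this)),
        mul_nonneg hq.le (mul_nonneg hpos.le (sub_nonneg.2 this))]
  have := mul_nonneg (le_of_lt (mul_pos (mul_pos hLA hLB) hP)) hY
  nlinarith [this, h5]

/-- Opposite sign case: the swap inequality fails. -/
lemma algebra_opp_sign (p q dA dB : ℝ)
    (hp : 0 ≤ p) (hpq : p < q) (hq1 : q ≤ 1)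
    (hP : dA * dB < 0) (hd : dB ^ 2 ≤ dA ^ 2)
    (hsum : ((2 - p) * dA - q * dB) ^ 2 + ((2 - q) * dB - p * dA) ^ 2 ≤
      ((2 - q) * dA - q * dB) ^ 2 + ((2 - p) * dB - p * dA) ^ 2) : False := by
  have h1 : 0 < q - p := sub_pos.2 hpq
  have h2 : 0 ≤ 4 - p - q := by linarith
  nlinarith [mul_nonneg h2 (sub_nonneg.2 hd), mul_pos (mul_pos h1 h1) (neg_pos.2 hP),
    mul_nonneg (mul_nonneg h1.le h2) (sub_nonneg.2 hd)]

/-- Proposition 4: diversity and revelation. If `|d_A| ≥ |d_B|`, every Nash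
equilibrium `(α_A*, α_B*)` satisfies `α_A* ≥ α_B*`. -/
theorem more_diverse_member_reveals_more
    (lam lam' c c' : ℝ → ℝ)
    (hlamDeriv : ∀ α ∈ Set.Icc (0:ℝ) 1, HasDerivAt lam (lam' α) α)
    (hlam'Cont : ContinuousOn lam' (Set.Icc (0:ℝ) 1))
    (hlam0 : lam 0 = 0) (hlam1 : lam 1 = 1)
    (hlam'pos : ∀ α ∈ Set.Icc (0:ℝ) 1, 0 < lam' α)
    (hlam'anti : ∀ x ∈ Set.Icc (0:ℝ) 1, ∀ y ∈ Set.Icc (0:ℝ) 1, x ≤ y → lam' y ≤ lam' x)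
    (hcDeriv : ∀ α ∈ Set.Ico (0:ℝ) 1, HasDerivAt c (c' α) α)
    (hc'Cont : ContinuousOn c' (Set.Ico (0:ℝ) 1))
    (hc0 : c 0 = 0)
    (hc'nonneg : ∀ α ∈ Set.Ico (0:ℝ) 1, 0 ≤ c' α)
    (hc'strictMono : ∀ x ∈ Set.Ico (0:ℝ) 1, ∀ y ∈ Set.Ico (0:ℝ) 1, x < y → c' x < c' y)
    (hc'top : Filter.Tendsto c' (nhdsWithin 1 (Set.Iio 1)) Filter.atTop)
    (thA thB muG dA dB : ℝ)
    (hdA : dA = thA - muG) (hdB : dB = thB - muG)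
    (hdAne : dA ≠ 0) (hdBne : dB ≠ 0) (hdiv : |dA| ≥ |dB|) :
    ∀ aA aB : ℝ, IsNashEq lam c thA thB muG aA aB → aB ≤ aA := by
  subst hdA; subst hdB
  intro aA aB hne
  obtain ⟨hAm, hBm, hAbr, hBbr⟩ := hne
  by_contra hcon
  push_neg at hcon
  have haA0 : 0 ≤ aA := hAm.1
  have haA1 : aA < 1 := hAm.2
  have haB1 : aB < 1 := hBm.2
  have haB0 : 0 < aB := lt_of_le_of_lt haA0 hcon
  have mA : aA ∈ Set.Icc (0:ℝ) 1 := ⟨haA0, haA1.le⟩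
  have mB : aB ∈ Set.Icc (0:ℝ) 1 := ⟨haB0.le, haB1.le⟩
  have m0 : (0:ℝ) ∈ Set.Icc (0:ℝ) 1 := ⟨le_refl _, zero_le_one⟩
  have m1 : (1:ℝ) ∈ Set.Icc (0:ℝ) 1 := ⟨zero_le_one, le_refl _⟩
  have hsm : StrictMonoOn lam (Set.Icc (0:ℝ) 1) := by
    apply strictMonoOn_of_deriv_pos (convex_Icc 0 1)
      (fun x hx => (hlamDeriv x hx).continuousAt.continuousWithinAt)
    intro x hx
    rw [interior_Icc] at hx
    rw [(hlamDeriv x (Set.Ioo_subset_Icc_self hx)).deriv]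
    exact hlam'pos x (Set.Ioo_subset_Icc_self hx)
  have hp0 : 0 ≤ lam aA := by
    have := hsm.monotoneOn m0 mA haA0
    rwa [hlam0] at this
  have hpq : lam aA < lam aB := hsm mA mB hcon
  have hq1 : lam aB < 1 := by
    have := hsm mB m1 haB1
    rwa [hlam1] at this
  have hq0 : 0 < lam aB := lt_of_le_of_lt hp0 hpq
  have hd2 : (thB - muG) ^ 2 ≤ (thA - muG) ^ 2 := by
    rw [← sq_abs (thA - muG), ← sq_abs (thB - muG)]
    exact pow_le_pow_left₀ (abs_nonneg _) hdiv 2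
  rcases lt_or_gt_of_ne (mul_ne_zero hdAne hdBne) with hopp | hsame
  · -- opposite signs: swap argument
    have hs1 := hAbr aB hBm
    have hs2 := hBbr aA hAm
    simp only [lossA, lossB, teamDec] at hs1 hs2
    refine algebra_opp_sign (lam aA) (lam aB) (thA - muG) (thB - muG)
      hp0 hpq hq1.le hopp hd2 ?_
    nlinarith [hs1, hs2]
  · -- same sign: first-order conditions
    -- Bob's FOC (interior)
    have hDB := hasDerivAt_lossB_snd lam c (lam' aB) (c' aB) thA thB muG aA aB
      (hlamDeriv aB mB) (hcDeriv aB hBm)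
    have hloc : IsLocalMin (fun α => lossB lam c thA thB muG aA α) aB := by
      have hnb : Set.Ico (0:ℝ) 1 ∈ nhds aB :=
        Filter.mem_of_superset (isOpen_Ioo.mem_nhds ⟨haB0, haB1⟩) Set.Ioo_subset_Ico_self
      exact Filter.eventually_of_mem hnb (fun x hx => hBbr x hx)
    have hBzero := hloc.hasDerivAt_eq_zero hDB
    -- Alice's FOC (possibly at the corner 0)
    have hDA := hasDerivAt_lossA_fst lam c (lam' aA) (c' aA) thA thB muG aB aA
      (hlamDeriv aA mA) (hcDeriv aA hAm)
    have hAnonneg : 0 ≤ -(thA - teamDec lam thA thB muG aA aB) * (lam' aA * (thA - muG)) + c' aA := by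
      rcases haA0.eq_or_lt with h0 | h0
      · have h0' : aA = 0 := h0.symm
        subst h0'
        exact deriv_nonneg_at_left _ _ hDA (fun x hx => hAbr x hx)
      · have hloc' : IsLocalMin (fun α => lossA lam c thA thB muG α aB) aA := by
          have hnb : Set.Ico (0:ℝ) 1 ∈ nhds aA :=
            Filter.mem_of_superset (isOpen_Ioo.mem_nhds ⟨h0, haA1⟩) Set.Ioo_subset_Ico_self
          exact Filter.eventually_of_mem hnb (fun x hx => hAbr x hx)
        rw [hloc'.hasDerivAt_eq_zero hDA]
    -- translate to polynomial conditions
    have eA : thA - teamDec lam thA thB muG aA aB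
        = ((2 - lam aA) * (thA - muG) - lam aB * (thB - muG)) / 2 := by
      simp only [teamDec]; ring
    have eB : thB - teamDec lam thA thB muG aA aB
        = ((2 - lam aB) * (thB - muG) - lam aA * (thA - muG)) / 2 := by
      simp only [teamDec]; ring
    rw [eA] at hAnonneg
    rw [eB] at hBzero
    refine algebra_same_sign (lam aA) (lam aB) (c' aA) (c' aB) (lam' aA) (lam' aB)
      (thA - muG) (thB - muG) hp0 hq0 (hlam'pos aA mA) (hlam'pos aB mB)
      (hlam'anti aA mA aB mB hcon.le) (hc'nonneg aA hAm)
      (hc'strictMono aA hAm aB hBm hcon) hsame hd2 ?_ ?_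
    · have eq1 : 2 * (-(((2 - lam aA) * (thA - muG) - lam aB * (thB - muG)) / 2)
            * (lam' aA * (thA - muG)) + c' aA)
          = 2 * c' aA - lam' aA * ((2 - lam aA) * (thA - muG) ^ 2
            - lam aB * ((thA - muG) * (thB - muG))) := by ring
      linarith [eq1, mul_le_mul_of_nonneg_left hAnonneg (by norm_num : (0:ℝ) ≤ 2)]
    · have eq2 : 2 * (-(((2 - lam aB) * (thB - muG) - lam aA * (thA - muG)) / 2)
            * (lam' aB * (thB - muG)) + c' aB)
          = 2 * c' aB - lam' aB * ((2 - lam aB) * (thB - muG) ^ 2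
            - lam aA * ((thA - muG) * (thB - muG))) := by ring
      have := congrArg (fun z => 2 * z) hBzero
      simp only [mul_zero] at this
      linarith [eq2, this]
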